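/- Suppose A, C ∈ M_n(F) satisfy: (1) a_{ij} ≠ 0 iff c_{ij} ≠ 0 for all i,j; and (2) for every cyclic sequence (i_1,...,i_p) of distinct indices such that for each k at least one of a_{i_k i_{k+1}}, a_{i_{k+1} i_k} is nonzero (with i_{p+1}=i_1), the cycle products f_{i_1 i_2}(A)⋯f_{i_p i_1}(A) and f_{i_1 i_2}(C)⋯f_{i_p i_1}(C) agree. Then there is an invertible diagonal matrix D with C = D A D^{-1}. -/

import Mathlib

open Classical

/-- f_{ij}(M): m_{ij} if nonzero; else 1/m_{ji} if m_{ji} ≠ 0; else 0. -/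
noncomputable def cycf {F : Type*} [Field F] {n : ℕ}
    (M : Matrix (Fin n) (Fin n) F) (i j : Fin n) : F :=
  if M i j ≠ 0 then M i j else if M j i ≠ 0 then (M j i)⁻¹ else 0

namespace CycAux
variable {F : Type*} [Field F] {n : ℕ}

def adjm (A : Matrix (Fin n) (Fin n) F) (i j : Fin n) : Prop :=
  A i j ≠ 0 ∨ A j i ≠ 0

lemma cycf_ne {A : Matrix (Fin n) (Fin n) F} {i j : Fin n} (h : adjm A i j) :
    cycf A i j ≠ 0 := by
  unfold cycf; rcases h with h | h
  · simp [h]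
  · by_cases h2 : A i j = 0 <;> simp [h, h2]

noncomputable def rr (A C : Matrix (Fin n) (Fin n) F) (i j : Fin n) : F :=
  cycf C i j * (cycf A i j)⁻¹

def Hcyc (A C : Matrix (Fin n) (Fin n) F) : Prop :=
  ∀ (p : ℕ) (c : ℕ → Fin n), 0 < p →
      (∀ k l, k < p → l < p → c k = c l → k = l) →
      (∀ k < p, A (c k) (c ((k + 1) % p)) ≠ 0 ∨ A (c ((k + 1) % p)) (c k) ≠ 0) →
      ∏ k ∈ Finset.range p, cycf A (c k) (c ((k + 1) % p)) =
        ∏ k ∈ Finset.range p, cycf C (c k) (c ((k + 1) % p))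

variable {A C : Matrix (Fin n) (Fin n) F}

lemma adjm_supp (hsupp : ∀ i j : Fin n, A i j ≠ 0 ↔ C i j ≠ 0)
    {i j : Fin n} (h : adjm A i j) : adjm C i j := by
  rcases h with h | h
  · exact Or.inl ((hsupp i j).1 h)
  · exact Or.inr ((hsupp j i).1 h)

lemma rr_mul_rr (hsupp : ∀ i j : Fin n, A i j ≠ 0 ↔ C i j ≠ 0) (hcyc : Hcyc A C)
    {i j : Fin n} (h : adjm A i j) : rr A C i j * rr A C j i = 1 := by
  have hA1 := cycf_ne h
  have hA2 := cycf_ne h.symm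
  have hC1 := cycf_ne (adjm_supp hsupp h)
  have hC2 := cycf_ne (adjm_supp hsupp h.symm)
  by_cases hij : i = j
  · subst hij
    have := hcyc 1 (fun _ => i) one_pos (by omega) (by
      intro k hk
      exact h.elim Or.inl Or.inl)
    simp only [Finset.prod_range_one] at this
    simp only [rr, this]
    field_simp
  · have := hcyc 2 (fun t => if t = 0 then i else j) two_pos
      (by intro k l hk hl he; interval_cases k <;> interval_cases l <;> simp_all)
      (by intro k hk; interval_cases k
          · simpa [adjm] using h
          · simpa [adjm] using h.symm)
    norm_num [Finset.prod_range_succ] at this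
    simp only [rr]
    rw [show cycf C i j * (cycf A i j)⁻¹ * (cycf C j i * (cycf A j i)⁻¹)
        = (cycf C i j * cycf C j i) * (cycf A i j * cycf A j i)⁻¹ from by
      rw [mul_inv]; ring]
    rw [← this, mul_inv_cancel₀ (mul_ne_zero hA1 hA2)]



noncomputable def wprod (A C : Matrix (Fin n) (Fin n) F) (p : ℕ) (c : ℕ → Fin n) : F :=
  ∏ k ∈ Finset.range p, rr A C (c k) (c (k + 1))

lemma closed_walk (hsupp : ∀ i j : Fin n, A i j ≠ 0 ↔ C i j ≠ 0) (hcyc : Hcyc A C) :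
    ∀ p : ℕ, ∀ c : ℕ → Fin n, c p = c 0 → (∀ k < p, adjm A (c k) (c (k + 1))) →
      wprod A C p c = 1 := by
  intro p
  induction p using Nat.strong_induction_on with
  | _ p IH =>
  intro c hclose hadj
  rcases Nat.eq_zero_or_pos p with hp | hp
  · simp [wprod, hp]
  by_cases hrep : ∃ k l, k < l ∧ l ≤ p ∧ (0 < k ∨ l < p) ∧ c k = c l
  · obtain ⟨k, l, hkl, hlp, hor, hckl⟩ := hrep
    set m := l - k with hm
    set q := p - l with hq
    have hpkmq : p = k + (m + q) := by omega
    have hl : l = k + m := by omega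
    set ci : ℕ → Fin n := fun j => c (k + j) with hci
    set co : ℕ → Fin n := fun j => if j ≤ k then c j else c (j + m) with hco
    have hco_le : ∀ j, j ≤ k → co j = c j := fun j hj => if_pos hj
    have hco_gt : ∀ j, k < j → co j = c (j + m) := fun j hj => if_neg (by omega)
    have hinner : wprod A C m ci = 1 := by
      apply IH m (by omega)
      · show c (k + m) = c (k + 0)
        rw [show k + m = l from by omega]
        exact hckl.symm
      · intro j hj
        exact hadj (k + j) (by omega)
    have houter : wprod A C (k + q) co = 1 := by
      apply IH (k + q) (by omega)
      · by_cases hq0 : q = 0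
        · calc co (k + q) = c k := by rw [show k + q = k from by omega]; exact hco_le k le_rfl
            _ = c l := hckl
            _ = c 0 := by rw [show l = p from by omega]; exact hclose
            _ = co 0 := (hco_le 0 (Nat.zero_le _)).symm
        · rw [hco_gt (k + q) (by omega), show k + q + m = p from by omega, hclose,
            hco_le 0 (Nat.zero_le _)]
      · intro j hj
        rcases lt_trichotomy j k with h1 | h1 | h1
        · rw [hco_le j (by omega), hco_le (j + 1) (by omega)]
          exact hadj j (by omega)
        · subst h1
          rw [hco_le j le_rfl, hco_gt (j + 1) (by omega), hckl,
            show j + 1 + m = l + 1 from by omega]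
          exact hadj l (by omega)
        · rw [hco_gt j (by omega), hco_gt (j + 1) (by omega),
            show j + 1 + m = (j + m) + 1 from by omega]
          exact hadj (j + m) (by omega)
    have hsplit : wprod A C p c = wprod A C (k + q) co * wprod A C m ci := by
      unfold wprod
      rw [hpkmq, Finset.prod_range_add, Finset.prod_range_add, Finset.prod_range_add]
      have e1 : ∀ x ∈ Finset.range k, rr A C (co x) (co (x + 1)) = rr A C (c x) (c (x + 1)) := by
        intro x hx
        have hx' := Finset.mem_range.1 hx
        rw [hco_le x (by omega), hco_le (x + 1) (by omega)]
      have e2 : ∀ x ∈ Finset.range q,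
          rr A C (co (k + x)) (co (k + x + 1)) = rr A C (c (k + (m + x))) (c (k + (m + x) + 1)) := by
        intro x hx
        have hx' := Finset.mem_range.1 hx
        have ha : co (k + x) = c (k + (m + x)) := by
          rcases Nat.eq_zero_or_pos x with h0 | h0
          · subst h0
            rw [hco_le (k + 0) le_rfl]
            show c k = _
            rw [hckl, show l = k + (m + 0) from by omega]
          · rw [hco_gt (k + x) (by omega), show k + x + m = k + (m + x) from by omega]
        have hb : co (k + x + 1) = c (k + (m + x) + 1) := by
          rw [hco_gt (k + x + 1) (by omega), show k + x + 1 + m = k + (m + x) + 1 from by omega]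
        rw [ha, hb]
      rw [Finset.prod_congr rfl e1, Finset.prod_congr rfl e2]
      have e3 : ∀ x ∈ Finset.range m, rr A C (ci x) (ci (x + 1)) = rr A C (c (k + x)) (c (k + x + 1)) := by
        intro x _; rfl
      rw [Finset.prod_congr rfl e3]
      ring
    rw [hsplit, houter, hinner, one_mul]
  · push_neg at hrep
    have hinj : ∀ k l, k < p → l < p → c k = c l → k = l := by
      intro k l hk hl he
      by_contra hne
      rcases Nat.lt_or_ge k l with h | h
      · exact hrep k l h (by omega) (Or.inr hl) he
      · exact hrep l k (by omega) (by omega) (Or.inr hk) he.symm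
    set c' : ℕ → Fin n := fun t => c (t % p) with hc'
    have hc'1 : ∀ k, k < p → c' k = c k := fun k hk => by
      show c (k % p) = c k
      rw [Nat.mod_eq_of_lt hk]
    have hc'2 : ∀ k, k < p → c' ((k + 1) % p) = c (k + 1) := by
      intro k hk
      rw [hc'1 _ (Nat.mod_lt _ hp)]
      by_cases h : k + 1 = p
      · rw [h, Nat.mod_self]
        exact hclose.symm
      · rw [Nat.mod_eq_of_lt (by omega)]
    have hkey := hcyc p c' hp
      (by intro a b ha hb he
          exact hinj a b ha hb (by rwa [hc'1 a ha, hc'1 b hb] at he))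
      (by intro a ha
          rw [hc'1 a ha, hc'2 a ha]
          exact hadj a ha)
    have hA : ∏ x ∈ Finset.range p, cycf A (c' x) (c' ((x + 1) % p))
        = ∏ x ∈ Finset.range p, cycf A (c x) (c (x + 1)) :=
      Finset.prod_congr rfl (fun a ha => by
        rw [hc'1 a (Finset.mem_range.1 ha), hc'2 a (Finset.mem_range.1 ha)])
    have hC : ∏ x ∈ Finset.range p, cycf C (c' x) (c' ((x + 1) % p))
        = ∏ x ∈ Finset.range p, cycf C (c x) (c (x + 1)) :=
      Finset.prod_congr rfl (fun a ha => by
        rw [hc'1 a (Finset.mem_range.1 ha), hc'2 a (Finset.mem_range.1 ha)])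
    rw [hA, hC] at hkey
    have hAne : ∏ x ∈ Finset.range p, cycf A (c x) (c (x + 1)) ≠ 0 :=
      Finset.prod_ne_zero_iff.2 fun a ha => cycf_ne (hadj a (Finset.mem_range.1 ha))
    calc wprod A C p c
        = (∏ x ∈ Finset.range p, cycf C (c x) (c (x + 1)))
          * (∏ x ∈ Finset.range p, cycf A (c x) (c (x + 1)))⁻¹ := by
          rw [wprod]
          simp only [rr]
          rw [Finset.prod_mul_distrib, Finset.prod_inv_distrib]
      _ = 1 := by rw [← hkey, mul_inv_cancel₀ hAne]



def reach (A : Matrix (Fin n) (Fin n) F) : Fin n → Fin n → Prop :=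
  Relation.ReflTransGen (adjm A)

lemma reach_symm {i j : Fin n} (h : reach A i j) : reach A j i :=
  by
    unfold reach at h ⊢
    induction h with
    | refl => exact Relation.ReflTransGen.refl
    | tail _ hbc ih => exact Relation.ReflTransGen.head hbc.symm ih

lemma rr_ne (hsupp : ∀ i j : Fin n, A i j ≠ 0 ↔ C i j ≠ 0)
    {i j : Fin n} (h : adjm A i j) : rr A C i j ≠ 0 := by
  have h1 := cycf_ne h
  have h2 := cycf_ne (adjm_supp hsupp h)
  simp [rr, h1, h2]

lemma exists_walk {i j : Fin n} (h : reach A i j) :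
    ∃ w : ℕ × (ℕ → Fin n), w.2 0 = i ∧ w.2 w.1 = j ∧
      ∀ k < w.1, adjm A (w.2 k) (w.2 (k + 1)) := by
  induction h with
  | refl => exact ⟨(0, fun _ => i), rfl, rfl, fun k hk => absurd hk (by omega)⟩
  | @tail b j' hab hbc ih =>
    obtain ⟨⟨p, w⟩, h0, hpw, hadjw⟩ := ih
    refine ⟨(p + 1, fun t => if t ≤ p then w t else j'), ?_, ?_, ?_⟩
    · show (if 0 ≤ p then w 0 else j') = i
      rw [if_pos (Nat.zero_le _)]; exact h0
    · show (if p + 1 ≤ p then w (p + 1) else j') = j'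
      rw [if_neg (by omega)]
    · intro k hk
      by_cases hkp : k < p
      · show adjm A (if k ≤ p then w k else j') (if k + 1 ≤ p then w (k + 1) else j')
        rw [if_pos (by omega), if_pos (by omega)]
        exact hadjw k hkp
      · have hkp' : k = p := by omega
        subst hkp'
        show adjm A (if k ≤ k then w k else j') (if k + 1 ≤ k then w (k + 1) else j')
        rw [if_pos le_rfl, if_neg (by omega), show w k = b from hpw]
        exact hbc

noncomputable def repv (A : Matrix (Fin n) (Fin n) F) (i : Fin n) : Fin n :=
  Classical.choose (⟨i, Relation.ReflTransGen.refl⟩ : ∃ j, reach A i j)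

lemma reach_repv (A : Matrix (Fin n) (Fin n) F) (i : Fin n) : reach A i (repv A i) :=
  Classical.choose_spec (⟨i, Relation.ReflTransGen.refl⟩ : ∃ j, reach A i j)

lemma choose_congr' {α : Sort*} {p q : α → Prop} (hp : ∃ a, p a) (hq : ∃ a, q a)
    (h : p = q) : Classical.choose hp = Classical.choose hq := by subst h; rfl

lemma repv_eq {i j : Fin n} (h : reach A i j) : repv A i = repv A j := by
  apply choose_congr'
  funext k
  exact propext ⟨fun hik => (reach_symm h).trans hik, fun hjk => h.trans hjk⟩

noncomputable def dwalk (A : Matrix (Fin n) (Fin n) F) (i : Fin n) : ℕ × (ℕ → Fin n) :=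
  Classical.choose (exists_walk (reach_repv A i))

lemma dwalk_spec (A : Matrix (Fin n) (Fin n) F) (i : Fin n) :
    (dwalk A i).2 0 = i ∧ (dwalk A i).2 (dwalk A i).1 = repv A i ∧
      ∀ k < (dwalk A i).1, adjm A ((dwalk A i).2 k) ((dwalk A i).2 (k + 1)) :=
  Classical.choose_spec (exists_walk (reach_repv A i))

noncomputable def dfun (A C : Matrix (Fin n) (Fin n) F) (i : Fin n) : F :=
  wprod A C (dwalk A i).1 (dwalk A i).2

lemma dfun_ne (hsupp : ∀ i j : Fin n, A i j ≠ 0 ↔ C i j ≠ 0) (i : Fin n) :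
    dfun A C i ≠ 0 := by
  obtain ⟨-, -, hadjw⟩ := dwalk_spec A i
  exact Finset.prod_ne_zero_iff.2 fun a ha =>
    rr_ne hsupp (hadjw a (Finset.mem_range.1 ha))



lemma wprod_eq (hsupp : ∀ i j : Fin n, A i j ≠ 0 ↔ C i j ≠ 0) (hcyc : Hcyc A C)
    {i j : Fin n} (p q : ℕ) (c e : ℕ → Fin n)
    (hc0 : c 0 = i) (hcp : c p = j) (hcadj : ∀ k < p, adjm A (c k) (c (k + 1)))
    (he0 : e 0 = i) (heq : e q = j) (headj : ∀ k < q, adjm A (e k) (e (k + 1))) :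
    wprod A C p c = wprod A C q e := by
  set f : ℕ → Fin n := fun t => if t ≤ p then c t else e (p + q - t) with hfdef
  have hf_le : ∀ t, t ≤ p → f t = c t := fun t ht => if_pos ht
  have hf_gt : ∀ t, p < t → f t = e (p + q - t) := fun t ht => if_neg (by omega)
  have hclosed : f (p + q) = f 0 := by
    rw [hf_le 0 (Nat.zero_le _), hc0]
    by_cases h : q = 0
    · rw [hf_le (p + q) (by omega), show p + q = p from by omega, hcp, ← heq, h, he0]
    · rw [hf_gt (p + q) (by omega), show p + q - (p + q) = 0 from by omega, he0]
  have hfadj : ∀ t < p + q, adjm A (f t) (f (t + 1)) := by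
    intro t ht
    rcases Nat.lt_or_ge t p with h1 | h1
    · rw [hf_le t (by omega), hf_le (t + 1) (by omega)]
      exact hcadj t h1
    · have h2 : f (t + 1) = e (p + q - t - 1) := by
        rw [hf_gt (t + 1) (by omega), show p + q - (t + 1) = p + q - t - 1 from by omega]
      have h3 : f t = e (p + q - t) := by
        rcases Nat.eq_or_lt_of_le h1 with h4 | h4
        · rw [hf_le t (by omega), ← h4, hcp, ← heq]
          congr 1
          omega
        · exact hf_gt t h4
      rw [h2, h3, show p + q - t = (p + q - t - 1) + 1 from by omega]
      exact (headj (p + q - t - 1) (by omega)).symm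
  have hcw := closed_walk hsupp hcyc (p + q) f hclosed hfadj
  have hterm : ∀ x ∈ Finset.range q, rr A C (f (p + x)) (f (p + x + 1))
      = (fun x => (rr A C (e x) (e (x + 1)))⁻¹) (q - 1 - x) := by
    intro x hx
    have hx' := Finset.mem_range.1 hx
    have ha : f (p + x) = e (q - x) := by
      rcases Nat.eq_zero_or_pos x with h0 | h0
      · subst h0
        rw [hf_le (p + 0) le_rfl]
        show c p = _
        rw [hcp, ← heq, show q - 0 = q from rfl]
      · rw [hf_gt (p + x) (by omega), show p + q - (p + x) = q - x from by omega]
    have hb : f (p + x + 1) = e (q - x - 1) := by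
      rw [hf_gt (p + x + 1) (by omega),
        show p + q - (p + x + 1) = q - x - 1 from by omega]
    rw [ha, hb]
    show _ = (rr A C (e (q - 1 - x)) (e (q - 1 - x + 1)))⁻¹
    rw [show q - 1 - x = q - x - 1 from by omega, show q - x - 1 + 1 = q - x from by omega]
    have hmul := rr_mul_rr hsupp hcyc (headj (q - x - 1) (by omega))
    rw [show q - x - 1 + 1 = q - x from by omega] at hmul
    exact eq_inv_of_mul_eq_one_right hmul
  have hsplit : wprod A C (p + q) f = wprod A C p c * (wprod A C q e)⁻¹ := by
    unfold wprod
    rw [Finset.prod_range_add]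
    congr 1
    · apply Finset.prod_congr rfl
      intro x hx
      have hx' := Finset.mem_range.1 hx
      rw [hf_le x (by omega), hf_le (x + 1) (by omega)]
    · rw [Finset.prod_congr rfl hterm, Finset.prod_range_reflect
        (fun x => (rr A C (e x) (e (x + 1)))⁻¹) q, ← Finset.prod_inv_distrib]
  have hene : wprod A C q e ≠ 0 :=
    Finset.prod_ne_zero_iff.2 fun a ha => rr_ne hsupp (headj a (Finset.mem_range.1 ha))
  rw [hsplit] at hcw
  exact (mul_inv_eq_one₀ hene).1 hcw



lemma dfun_edge (hsupp : ∀ i j : Fin n, A i j ≠ 0 ↔ C i j ≠ 0) (hcyc : Hcyc A C)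
    {i j : Fin n} (h : adjm A i j) : dfun A C i = rr A C i j * dfun A C j := by
  obtain ⟨hj0, hjp, hjadj⟩ := dwalk_spec A j
  obtain ⟨hi0, hip, hiadj⟩ := dwalk_spec A i
  set pj := (dwalk A j).1 with hpj
  set wj := (dwalk A j).2 with hwj
  set w' : ℕ → Fin n := fun t => if t = 0 then i else wj (t - 1) with hw'
  have h0 : w' 0 = i := if_pos rfl
  have hend : w' (pj + 1) = repv A i := by
    show (if pj + 1 = 0 then i else wj (pj + 1 - 1)) = _
    rw [if_neg (by omega)]
    show wj pj = _
    rw [hjp, repv_eq (Relation.ReflTransGen.single h)]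
  have hadj' : ∀ k < pj + 1, adjm A (w' k) (w' (k + 1)) := by
    intro k hk
    by_cases hk0 : k = 0
    · subst hk0
      show adjm A (if (0 : ℕ) = 0 then i else _) (if (1 : ℕ) = 0 then i else wj (1 - 1))
      rw [if_pos rfl, if_neg one_ne_zero]
      show adjm A i (wj 0)
      rw [hj0]; exact h
    · have e1 : w' k = wj (k - 1) := if_neg hk0
      have e2 : w' (k + 1) = wj k := by
        show (if k + 1 = 0 then i else wj (k + 1 - 1)) = _
        rw [if_neg (by omega), show k + 1 - 1 = k from by omega]
      rw [e1, e2]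
      have := hjadj (k - 1) (by omega)
      rwa [show k - 1 + 1 = k from by omega] at this
  have hprod : wprod A C (pj + 1) w' = rr A C i j * wprod A C pj wj := by
    unfold wprod
    rw [Finset.prod_range_succ']
    have e0 : rr A C (w' 0) (w' (0 + 1)) = rr A C i j := by
      rw [h0]
      show rr A C i (if (1 : ℕ) = 0 then i else wj (1 - 1)) = _
      rw [if_neg one_ne_zero]
      show rr A C i (wj 0) = _
      rw [hj0]
    have et : ∀ x ∈ Finset.range pj,
        rr A C (w' (x + 1)) (w' (x + 1 + 1)) = rr A C (wj x) (wj (x + 1)) := by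
      intro x _
      have e1 : w' (x + 1) = wj x := by
        show (if x + 1 = 0 then i else wj (x + 1 - 1)) = _
        rw [if_neg (by omega), show x + 1 - 1 = x from by omega]
      have e2 : w' (x + 1 + 1) = wj (x + 1) := by
        show (if x + 1 + 1 = 0 then i else wj (x + 1 + 1 - 1)) = _
        rw [if_neg (by omega), show x + 1 + 1 - 1 = x + 1 from by omega]
      rw [e1, e2]
    rw [Finset.prod_congr rfl et, e0]
    ring
  have hind := wprod_eq hsupp hcyc (pj + 1) (dwalk A i).1 w' (dwalk A i).2
    h0 hend hadj' hi0 hip hiadj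
  rw [hprod] at hind
  exact hind.symm

end CycAux

/-- if A and C have the same nonzero pattern and all cyclic products
of f-values agree, then C = D A D⁻¹ for some invertible diagonal D. -/
theorem diagonal_similar_of_cycle_products {F : Type*} [Field F] {n : ℕ}
    (A C : Matrix (Fin n) (Fin n) F)
    (hsupp : ∀ i j : Fin n, A i j ≠ 0 ↔ C i j ≠ 0)
    (hcyc : ∀ (p : ℕ) (c : ℕ → Fin n), 0 < p →
      (∀ k l, k < p → l < p → c k = c l → k = l) →
      (∀ k < p, A (c k) (c ((k + 1) % p)) ≠ 0 ∨ A (c ((k + 1) % p)) (c k) ≠ 0) →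
      ∏ k ∈ Finset.range p, cycf A (c k) (c ((k + 1) % p)) =
        ∏ k ∈ Finset.range p, cycf C (c k) (c ((k + 1) % p))) :
    ∃ d : Fin n → F, (∀ i, d i ≠ 0) ∧
      C = Matrix.diagonal d * A * Matrix.diagonal (fun i => (d i)⁻¹) := by
  refine ⟨CycAux.dfun A C, fun i => CycAux.dfun_ne hsupp i, ?_⟩
  ext i j
  rw [Matrix.mul_assoc, Matrix.diagonal_mul, Matrix.mul_diagonal]
  by_cases hA : A i j = 0
  · have hC : C i j = 0 := by
      by_contra hC
      exact ((hsupp i j).2 hC) hA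
    simp [hA, hC]
  · have hC : C i j ≠ 0 := (hsupp i j).1 hA
    have hedge := CycAux.dfun_edge hsupp hcyc (Or.inl hA)
    have hrr : CycAux.rr A C i j = C i j * (A i j)⁻¹ := by
      simp [CycAux.rr, cycf, hA, hC]
    rw [hedge, hrr]
    have hd := CycAux.dfun_ne (C := C) hsupp j
    field_simp
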